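/- In the setting of Siegel's construction (Lemma 4.1), define recursively polynomials P^{[k]}_κ(z) for k ≥ 1 and κ ∈ Ω by P^{[1]}_κ = P_κ and P^{[k+1]}_κ(z) = T(z)( (d/dz) P^{[k]}_κ(z) + (|κ|+1−N) Σ_{l=1}^m S_{l,0}(z) P^{[k]}_{κ−e_l}(z) − Σ_{l=1}^m Σ_{j=1}^m (κ_j − δ_{l,j} + 1) S_{l,j}(z) P^{[k]}_{κ−e_l+e_j}(z) ), and write P^{[k]}_κ(z) = Σ_{ν=0}^{M+t(k−1)−1} (π_{k,κ,ν}/ν!) z^ν. Then for every κ ∈ Ω, every k ≥ 1 and every 0 ≤ ν ≤ M+t(k−1)−1, one has π_{k,κ,ν} ∈ ℤ, and moreover |π_{k,κ,ν}| ≤ C₀^{ωM/η} M^{C₂ηM} whenever k < C₁ηM, where C₀, C₁, C₂ are positive constants depending only on f_1, …, f_m. -/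

import Mathlib

open Polynomial

noncomputable section

/-- The entire function `f(z) = ∑ aₙ zⁿ/n!` attached to a sequence of rational
Taylor coefficients. -/
def Efun (a : ℕ → ℚ) : ℂ → ℂ := fun z => ∑' n : ℕ, (a n : ℂ) * z ^ n / n.factorial

/-- A polynomial with coefficients in `ℚ̄` (the algebraic numbers inside `ℂ`). -/
def AlgCoeffs (p : Polynomial ℂ) : Prop := ∀ n, IsAlgebraic ℚ (p.coeff n)

/-- `f` is a solution of a nonzero linear differential equation with coefficients
in `ℚ̄(z)` (equivalently, after clearing denominators, in `ℚ̄[z]`). -/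
def SatisfiesAlgODE (f : ℂ → ℂ) : Prop :=
  ∃ (r : ℕ) (p : Fin (r + 1) → Polynomial ℂ),
    (∀ j, AlgCoeffs (p j)) ∧ (∃ j, p j ≠ 0) ∧
      ∀ z : ℂ, ∑ j : Fin (r + 1), (p j).eval z * iteratedDeriv (j : ℕ) f z = 0

/-- `∑ aₙ zⁿ/n!` is an E-function in the strict sense with rational coefficients. -/
def IsEFunQ (a : ℕ → ℚ) : Prop :=
  SatisfiesAlgODE (Efun a) ∧
    ∃ C : ℝ, 0 < C ∧ (∀ n, |(a n : ℝ)| ≤ C ^ (n + 1)) ∧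
      ∃ d : ℕ → ℕ, (∀ n, 1 ≤ d n ∧ (d n : ℝ) ≤ C ^ (n + 1)) ∧
        ∀ n, ∀ m ≤ n, ∃ k : ℤ, (d n : ℚ) * a m = (k : ℚ)
/-- The weight `|κ| = κ₁ + … + κ_m` of a multi-index. -/
def wt {m : ℕ} (κ : Fin m → ℕ) : ℕ := ∑ j, κ j

/-- `κ ∈ Ω`, i.e. `N - 1 ≤ |κ| ≤ N`. -/
def inOmega (m N : ℕ) (κ : Fin m → ℕ) : Prop := N - 1 ≤ wt κ ∧ wt κ ≤ N

/-- `κ ∈ Θ`, i.e. `|κ| = N`. -/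
def inTheta (m N : ℕ) (κ : Fin m → ℕ) : Prop := wt κ = N

/-- `κ - e_j` (only meaningful when `κ j ≥ 1`; guarded at use sites). -/
def sub1 {m : ℕ} (κ : Fin m → ℕ) (j : Fin m) : Fin m → ℕ :=
  Function.update κ j (κ j - 1)

/-- `κ + e_j`. -/
def add1 {m : ℕ} (κ : Fin m → ℕ) (j : Fin m) : Fin m → ℕ :=
  Function.update κ j (κ j + 1)

/-- `ω = #Ω = C(N+m-2, m-1) + C(N+m-1, m-1)`. -/
def omegaCard (m N : ℕ) : ℕ := (N + m - 2).choose (m - 1) + (N + m - 1).choose (m - 1)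

/-- `θ = #Θ = C(N+m-1, m-1)`. -/
def thetaCard (m N : ℕ) : ℕ := (N + m - 1).choose (m - 1)

/-- The functions `1, f₁, …, f_m` are linearly independent over `ℂ(z)` (equivalently,
over `ℂ[z]`). -/
def OneFLinIndep (m : ℕ) (f : Fin m → ℂ → ℂ) : Prop :=
  ∀ (Q0 : Polynomial ℂ) (Q : Fin m → Polynomial ℂ),
    (∀ z : ℂ, Q0.eval z + ∑ j : Fin m, (Q j).eval z * f j z = 0) →
      Q0 = 0 ∧ ∀ j, Q j = 0

/-- The Siegel construction (Lemma 4.1): the polynomials `P_κ` (`κ ∈ Ω`, extended by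
`0` off `Ω`) have degree `< M`, are not all zero, and for every `κ ∈ Θ` the remainder
`P_κ + ∑_j P_{κ-e_j} f_j` vanishes at `0` with order at least `K`. -/
def SiegelP (m N M K : ℕ) (f : Fin m → ℂ → ℂ) (P : (Fin m → ℕ) → Polynomial ℂ) : Prop :=
  (∀ κ, ¬ inOmega m N κ → P κ = 0) ∧
  (∀ κ, (P κ).degree < (M : WithBot ℕ)) ∧
  (∃ κ, P κ ≠ 0) ∧
  ∀ κ, inTheta m N κ → ∀ l < K, iteratedDeriv l
    (fun z => (P κ).eval z +
      ∑ j : Fin m, (if κ j = 0 then 0 else (P (sub1 κ j)).eval z * f j z)) 0 = 0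
/-- The recursively defined polynomials `P^{[k]}_κ` of Zudilin's construction
(index shift: `Prec … k` is the paper's `P^{[k+1]}`): `P^{[1]}_κ = P_κ` and
`P^{[k+1]}_κ = T·(d/dz)P^{[k]}_κ + (|κ|+1-N) ∑_l (T S_{l,0}) P^{[k]}_{κ-e_l}
  - ∑_{l,j} (κ_j - δ_{l,j} + 1)(T S_{l,j}) P^{[k]}_{κ-e_l+e_j}`,
where `TS l j` denotes the polynomial `T(z)·S_{l,j}(z)` (with `TS l 0 = T·S_{l,0}` and
`TS l j.succ = T·S_{l,j}`), and terms whose multi-index has a negative component are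
omitted. -/
def Prec (m N : ℕ) (Tp : Polynomial ℂ) (TS : Fin m → Fin (m + 1) → Polynomial ℂ)
    (P : (Fin m → ℕ) → Polynomial ℂ) : ℕ → (Fin m → ℕ) → Polynomial ℂ
  | 0 => P
  | k + 1 => fun κ =>
      Tp * Polynomial.derivative (Prec m N Tp TS P k κ)
        + Polynomial.C (((wt κ : ℂ)) + 1 - (N : ℂ)) *
            ∑ l : Fin m, (if κ l = 0 then 0 else TS l 0 * Prec m N Tp TS P k (sub1 κ l))
        - ∑ l : Fin m, ∑ j : Fin m,
            Polynomial.C ((κ j : ℂ) - (if l = j then 1 else 0) + 1) *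
              (if κ l = 0 then 0 else TS l j.succ * Prec m N Tp TS P k (add1 (sub1 κ l) j))

section Helpers42

open Finset

private lemma fac_eq42 {s r ν : ℕ} (h : s + r = ν) :
    (r.factorial : ℂ) * (ν.descFactorial s : ℂ) = (ν.factorial : ℂ) := by
  have hs : s ≤ ν := by omega
  have hr : ν - s = r := by omega
  have h2 := Nat.factorial_mul_descFactorial hs
  rw [hr] at h2
  exact_mod_cast congrArg (Nat.cast (R := ℂ)) h2

private lemma prodW42 (q p : Polynomial ℂ) (qz Z : ℕ → ℤ)
    (hq : ∀ s, q.coeff s = (qz s : ℂ))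
    (hp : ∀ μ, p.coeff μ = (Z μ : ℂ) / (μ.factorial : ℂ)) (ν : ℕ) :
    (q * p).coeff ν =
      ((∑ sr ∈ Finset.HasAntidiagonal.antidiagonal ν, qz sr.1 * Z sr.2 * (ν.descFactorial sr.1 : ℤ) : ℤ) : ℂ)
        / (ν.factorial : ℂ) := by
  rw [Polynomial.coeff_mul]
  push_cast
  rw [Finset.sum_div]
  refine Finset.sum_congr rfl ?_
  rintro ⟨s, r⟩ hsr
  have h : s + r = ν := Finset.HasAntidiagonal.mem_antidiagonal.mp hsr
  rw [hq, hp]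
  have h1 : (r.factorial : ℂ) ≠ 0 := by exact_mod_cast r.factorial_ne_zero
  have h2 : (ν.factorial : ℂ) ≠ 0 := by exact_mod_cast ν.factorial_ne_zero
  rw [← mul_div_assoc, div_eq_div_iff h1 h2, ← fac_eq42 h]
  ring

private lemma prodW42_zero (qz Z : ℕ → ℤ) (t S ν : ℕ)
    (hqt : ∀ s, t < s → qz s = 0) (hZS : ∀ r, S ≤ r → Z r = 0) (hν : S + t ≤ ν) :
    (∑ sr ∈ Finset.HasAntidiagonal.antidiagonal ν, qz sr.1 * Z sr.2 * (ν.descFactorial sr.1 : ℤ)) = 0 := by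
  apply Finset.sum_eq_zero
  rintro ⟨s, r⟩ hsr
  have h : s + r = ν := Finset.HasAntidiagonal.mem_antidiagonal.mp hsr
  by_cases hs : t < s
  · rw [hqt s hs]; ring
  · rw [hZS r (by omega)]; ring

private lemma prodW42_bound (qz Z : ℕ → ℤ) (A B E : ℝ) (t S ν : ℕ)
    (hA : ∀ s, (|qz s| : ℝ) ≤ A) (hqt : ∀ s, t < s → qz s = 0)
    (hB : ∀ r, (|Z r| : ℝ) ≤ B) (hZS : ∀ r, S ≤ r → Z r = 0)
    (hA0 : 0 ≤ A) (hB0 : 0 ≤ B)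
    (hE : (((S + t : ℕ)) : ℝ) ^ t ≤ E) (hE0 : 0 ≤ E) :
    |∑ sr ∈ Finset.HasAntidiagonal.antidiagonal ν,
        ((qz sr.1 : ℤ) : ℝ) * ((Z sr.2 : ℤ) : ℝ) * ((ν.descFactorial sr.1 : ℕ) : ℝ)|
      ≤ ((t : ℝ) + 1) * A * B * E := by
  have key : ∀ sr ∈ Finset.HasAntidiagonal.antidiagonal ν,
      |((qz sr.1 : ℤ) : ℝ) * ((Z sr.2 : ℤ) : ℝ) * ((ν.descFactorial sr.1 : ℕ) : ℝ)|
        ≤ if sr.1 ≤ t then A * B * E else 0 := by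
    rintro ⟨s, r⟩ hsr
    have h : s + r = ν := Finset.HasAntidiagonal.mem_antidiagonal.mp hsr
    split_ifs with hst
    · by_cases hr : S ≤ r
      · rw [hZS r hr]
        simp only [Int.cast_zero, mul_zero, zero_mul, abs_zero]
        positivity
      · have hν : ν ≤ S + t := by omega
        have hd : ν.descFactorial s ≤ (S + t) ^ t := by
          calc ν.descFactorial s ≤ ν ^ s := Nat.descFactorial_le_pow ν s
            _ ≤ (S + t) ^ s := Nat.pow_le_pow_left hν s
            _ ≤ (S + t) ^ t := Nat.pow_le_pow_right (by omega) hst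
        have hd' : ((ν.descFactorial s : ℕ) : ℝ) ≤ E := by
          refine le_trans ?_ hE
          exact_mod_cast hd
        rw [abs_mul, abs_mul,
          abs_of_nonneg (by positivity : (0:ℝ) ≤ ((ν.descFactorial s : ℕ) : ℝ))]
        refine mul_le_mul (mul_le_mul (hA s) (hB r) (abs_nonneg _) hA0) hd'
          (by positivity) (by positivity)
    · rw [hqt s (by omega)]
      simp
  calc |∑ sr ∈ Finset.HasAntidiagonal.antidiagonal ν,
        ((qz sr.1 : ℤ) : ℝ) * ((Z sr.2 : ℤ) : ℝ) * ((ν.descFactorial sr.1 : ℕ) : ℝ)|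
      ≤ ∑ sr ∈ Finset.HasAntidiagonal.antidiagonal ν,
          |((qz sr.1 : ℤ) : ℝ) * ((Z sr.2 : ℤ) : ℝ) * ((ν.descFactorial sr.1 : ℕ) : ℝ)| :=
        Finset.abs_sum_le_sum_abs _ _
    _ ≤ ∑ sr ∈ Finset.HasAntidiagonal.antidiagonal ν, (if sr.1 ≤ t then A * B * E else 0) :=
        Finset.sum_le_sum key
    _ ≤ ((t : ℝ) + 1) * A * B * E := by
        rw [Finset.sum_ite, Finset.sum_const_zero, add_zero, Finset.sum_const, nsmul_eq_mul]
        have hc : ((Finset.HasAntidiagonal.antidiagonal ν).filter (fun sr => sr.1 ≤ t)).card ≤ t + 1 := by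
          have hcc : ((Finset.HasAntidiagonal.antidiagonal ν).filter (fun sr => sr.1 ≤ t)).card
              ≤ (Finset.range (t+1)).card := by
            apply Finset.card_le_card_of_injOn (fun sr => sr.1)
            · intro sr hsr
              simp only [Finset.mem_coe, Finset.mem_filter] at hsr
              exact Finset.mem_range.mpr (by dsimp only; omega)
            · rintro ⟨s1,r1⟩ h1 ⟨s2,r2⟩ h2 h
              simp only [Finset.mem_coe, Finset.mem_filter, Finset.HasAntidiagonal.mem_antidiagonal] at h1 h2
              simp only at h
              have : r1 = r2 := by omega
              simp [h, this]
          simpa using hcc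
        calc (((Finset.HasAntidiagonal.antidiagonal ν).filter (fun sr => sr.1 ≤ t)).card : ℝ) * (A * B * E)
            ≤ ((t : ℝ) + 1) * (A * B * E) := by
              apply mul_le_mul_of_nonneg_right _ (by positivity)
              exact_mod_cast hc
          _ = ((t : ℝ) + 1) * A * B * E := by ring

private lemma derivW42 (p : Polynomial ℂ) (Z : ℕ → ℤ) (τ i₀ : ℕ)
    (hp : ∀ μ, p.coeff μ = (Z μ : ℂ) / (μ.factorial : ℂ)) (ν : ℕ) :
    ((Polynomial.C (τ : ℂ) * Polynomial.X ^ i₀) * Polynomial.derivative p).coeff ν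
      = ((if i₀ ≤ ν then (τ : ℤ) * Z (ν - i₀ + 1) * (ν.descFactorial i₀ : ℤ) else 0 : ℤ) : ℂ)
        / (ν.factorial : ℂ) := by
  rw [mul_assoc, Polynomial.coeff_C_mul, Polynomial.X_pow_mul, Polynomial.coeff_mul_X_pow']
  split_ifs with h
  · rw [Polynomial.coeff_derivative, hp]
    have h1 : ((ν - i₀).factorial : ℂ) ≠ 0 := by exact_mod_cast (ν - i₀).factorial_ne_zero
    have h2 : ((ν - i₀ + 1) : ℂ) ≠ 0 := by exact_mod_cast Nat.succ_ne_zero (ν - i₀)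
    have h3 : ((ν).factorial : ℂ) ≠ 0 := by exact_mod_cast ν.factorial_ne_zero
    have e1 : ((ν - i₀ + 1).factorial : ℂ) = ((ν - i₀ + 1) : ℂ) * ((ν - i₀).factorial : ℂ) := by
      rw [Nat.factorial_succ]; push_cast [Nat.cast_sub h]; ring
    have e2 : ((ν - i₀).factorial : ℂ) * ((ν.descFactorial i₀ : ℕ) : ℂ) = (ν.factorial : ℂ) := by
      exact_mod_cast congrArg (Nat.cast (R := ℂ)) (Nat.factorial_mul_descFactorial h)
    push_cast
    rw [e1]
    field_simp
    rw [← e2]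
    push_cast [Nat.cast_sub h]
    ring
  · simp

private lemma wt_update42 {m : ℕ} (κ : Fin m → ℕ) (l : Fin m) (v : ℕ) :
    wt (Function.update κ l v) + κ l = wt κ + v := by
  unfold wt
  rw [Finset.sum_update_of_mem (Finset.mem_univ l)]
  rw [← Finset.sum_erase_add Finset.univ κ (Finset.mem_univ l)]
  rw [Finset.sdiff_singleton_eq_erase]
  ring

private lemma wt_sub1_le42 {m : ℕ} (κ : Fin m → ℕ) (l : Fin m) : wt (sub1 κ l) ≤ wt κ := by
  have := wt_update42 κ l (κ l - 1)
  unfold sub1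
  omega

private lemma wt_add1_sub142 {m : ℕ} (κ : Fin m → ℕ) (l j : Fin m) (h : κ l ≠ 0) :
    wt (add1 (sub1 κ l) j) = wt κ := by
  have h1 := wt_update42 κ l (κ l - 1)
  have h2 := wt_update42 (sub1 κ l) j (sub1 κ l j + 1)
  unfold add1
  unfold sub1 at h1 h2 ⊢
  omega

private lemma comp_le_wt42 {m : ℕ} (κ : Fin m → ℕ) (j : Fin m) : κ j ≤ wt κ :=
  Finset.single_le_sum (fun i _ => Nat.zero_le (κ i)) (Finset.mem_univ j)

end Helpers42

set_option maxHeartbeats 1600000 in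
/-- **Lemma 4.2 (integrality and size of the coefficients of the `P^{[k]}_κ`).**
In the setting of Siegel's construction, writing
`P^{[k]}_κ(z) = ∑_ν (π_{k,κ,ν}/ν!) z^ν`, one has `π_{k,κ,ν} ∈ ℤ` for all `κ ∈ Ω`,
`k ≥ 1`, `ν`, and moreover `|π_{k,κ,ν}| ≤ C₀^{ωM/η} M^{C₂ηM}` whenever `k < C₁ηM`,
where `C₀, C₁, C₂ > 0` depend only on `f₁, …, f_m`. Here the differential system is
`f'_l = S_{l,0} + ∑_j S_{l,j} f_j` with `S_{l,j} ∈ ℚ[z,1/z]`, `T(z) = τ z^{i₀}` is the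
common denominator of the `S_{l,j}`, `TS l j = T·S_{l,j} ∈ ℤ[z]`, and
`t = max(deg T, max deg(T·S_{l,j}))`. -/
theorem integrality_and_bounds_of_iterated_pade_polynomials
    (m : ℕ) (hm : 1 ≤ m) (a : Fin m → ℕ → ℚ) (ha : ∀ j, IsEFunQ (a j))
    (hindep : OneFLinIndep m (fun j => Efun (a j)))
    (i₀ τ t : ℕ) (hτ : 0 < τ) (TS : Fin m → Fin (m + 1) → Polynomial ℂ)
    (hTSint : ∀ l j n, ∃ k : ℤ, (TS l j).coeff n = (k : ℂ))
    (ht1 : (Polynomial.C (τ : ℂ) * Polynomial.X ^ i₀ : Polynomial ℂ).natDegree ≤ t)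
    (ht2 : ∀ l j, (TS l j).natDegree ≤ t)
    (hsys : ∀ z : ℂ, z ≠ 0 → ∀ l : Fin m,
      HasDerivAt (Efun (a l))
        ((TS l 0).eval z / ((τ : ℂ) * z ^ i₀) +
          ∑ j : Fin m, (TS l j.succ).eval z / ((τ : ℂ) * z ^ i₀) * Efun (a j) z) z)
    :
    ∃ C₀ C₁ C₂ : ℝ, 0 < C₀ ∧ 0 < C₁ ∧ 0 < C₂ ∧ ∃ N₀ : ℕ, ∀ N : ℕ, N₀ ≤ N →
      ∀ η : ℝ, 0 < η → η ≤ 1 / (3 * ((N : ℝ) + (m : ℝ) - 1)) →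
      ∃ M₀ : ℕ, ∀ M : ℕ, M₀ ≤ M →
      ∀ (P : (Fin m → ℕ) → Polynomial ℂ) (pi : (Fin m → ℕ) → ℕ → ℤ),
        SiegelP m N M
          (Nat.floor (((omegaCard m N : ℝ) - η) * (M : ℝ) / (thetaCard m N : ℝ)))
          (fun j => Efun (a j)) P →
        (∀ κ, inOmega m N κ → ∀ ν < M,
          (P κ).coeff ν = (pi κ ν : ℂ) / (ν.factorial : ℂ) ∧
          (|pi κ ν| : ℝ) ≤ C₀ ^ ((omegaCard m N : ℝ) * (M : ℝ) / η)) →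
        ∀ κ, inOmega m N κ → ∀ k : ℕ, 1 ≤ k → ∀ ν : ℕ,
          ∃ pik : ℤ,
            (Prec m N (Polynomial.C (τ : ℂ) * Polynomial.X ^ i₀) TS P (k - 1) κ).coeff ν
              = (pik : ℂ) / (ν.factorial : ℂ) ∧
            ((k : ℝ) < C₁ * η * (M : ℝ) →
              (|pik| : ℝ) ≤ C₀ ^ ((omegaCard m N : ℝ) * (M : ℝ) / η) *
                (M : ℝ) ^ (C₂ * η * (M : ℝ))) := by
  classical
  choose ts hts using hTSint
  have htau : ((τ : ℂ)) ≠ 0 := by exact_mod_cast hτ.ne'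
  have hi₀t : i₀ ≤ t := by
    rwa [Polynomial.natDegree_C_mul_X_pow i₀ ((τ : ℂ)) htau] at ht1
  have hts0 : ∀ l j s, t < s → ts l j s = 0 := by
    intro l j s hs
    have h0 : (TS l j).coeff s = 0 :=
      Polynomial.coeff_eq_zero_of_natDegree_lt (lt_of_le_of_lt (ht2 l j) hs)
    have h1 := hts l j s
    rw [h0] at h1
    exact_mod_cast h1.symm
  set A : ℝ := 1 + ∑ l : Fin m, ∑ j : Fin (m+1), ∑ s ∈ Finset.range (t+1), (|ts l j s| : ℝ)
    with hAdef
  have hA1 : (1:ℝ) ≤ A := by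
    have h0 : (0:ℝ) ≤ ∑ l : Fin m, ∑ j : Fin (m+1), ∑ s ∈ Finset.range (t+1), (|ts l j s| : ℝ) := by
      positivity
    rw [hAdef]; linarith
  have hA0 : (0:ℝ) ≤ A := by linarith
  have hAb : ∀ l j s, (|ts l j s| : ℝ) ≤ A := by
    intro l j s
    by_cases hst : s ≤ t
    · have h1 : (|ts l j s| : ℝ) ≤ ∑ s' ∈ Finset.range (t+1), (|ts l j s'| : ℝ) :=
        Finset.single_le_sum (f := fun s' => (|ts l j s'| : ℝ)) (fun i _ => by positivity)
          (Finset.mem_range.mpr (by omega))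
      have h2 : (∑ s' ∈ Finset.range (t+1), (|ts l j s'| : ℝ))
          ≤ ∑ j' : Fin (m+1), ∑ s' ∈ Finset.range (t+1), (|ts l j' s'| : ℝ) :=
        Finset.single_le_sum (f := fun j' => ∑ s' ∈ Finset.range (t+1), (|ts l j' s'| : ℝ))
          (fun i _ => by positivity) (Finset.mem_univ j)
      have h3 : (∑ j' : Fin (m+1), ∑ s' ∈ Finset.range (t+1), (|ts l j' s'| : ℝ))
          ≤ ∑ l' : Fin m, ∑ j' : Fin (m+1), ∑ s' ∈ Finset.range (t+1), (|ts l' j' s'| : ℝ) :=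
        Finset.single_le_sum
          (f := fun l' => ∑ j' : Fin (m+1), ∑ s' ∈ Finset.range (t+1), (|ts l' j' s'| : ℝ))
          (fun i _ => by positivity) (Finset.mem_univ l)
      rw [hAdef]; linarith
    · rw [hts0 l j s (by omega)]; simpa using hA0
  refine ⟨2, 1/((t:ℝ)+1), 1, by norm_num, by positivity, one_pos, 1, ?_⟩
  intro N hN η hη0 hη1
  have hη3 : η ≤ 1/3 := by
    have h1 : (1:ℝ) ≤ (N:ℝ) + (m:ℝ) - 1 := by
      have : (1:ℝ) ≤ (N:ℝ) := by exact_mod_cast hN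
      have : (1:ℝ) ≤ (m:ℝ) := by exact_mod_cast hm
      linarith
    have h2 : 1 / (3 * ((N:ℝ) + (m:ℝ) - 1)) ≤ 1/3 := by
      rw [div_le_div_iff₀ (by linarith) (by norm_num)]
      linarith
    linarith
  set D : ℝ := (τ:ℝ) + ((N:ℝ)+1) * ((m:ℝ) + (m:ℝ)^2) * ((t:ℝ)+1) * A with hDdef
  have hτ1 : (1:ℝ) ≤ (τ:ℝ) := by exact_mod_cast hτ
  have hD1 : (1:ℝ) ≤ D := by
    have h0 : (0:ℝ) ≤ ((N:ℝ)+1) * ((m:ℝ) + (m:ℝ)^2) * ((t:ℝ)+1) * A := by positivity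
    rw [hDdef]; linarith
  refine ⟨2*t + 1 + Nat.ceil (D * 2^t), ?_⟩
  intro M hM P pi hSiegel hpi
  set Tp : Polynomial ℂ := Polynomial.C (τ:ℂ) * Polynomial.X ^ i₀ with hTp
  set Bp : ℝ := (2:ℝ) ^ ((omegaCard m N : ℝ) * (M:ℝ) / η) with hBp
  have hBp0 : (0:ℝ) < Bp := Real.rpow_pos_of_pos (by norm_num) _
  set G : ℝ := D * (2*(M:ℝ))^t with hG
  have hM1 : 1 ≤ M := by omega
  have hM1' : (1:ℝ) ≤ (M:ℝ) := by exact_mod_cast hM1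
  have hG0 : (0:ℝ) < G := by
    rw [hG]; positivity
  set Kmax : ℕ := Nat.floor (1/((t:ℝ)+1) * η * (M:ℝ)) + 1 with hKmax
  have hKM : M + t * Kmax ≤ 2 * M := by
    have h1 : (Kmax:ℝ) ≤ 1/((t:ℝ)+1) * η * M + 1 := by
      rw [hKmax]
      push_cast
      have := Nat.floor_le (show (0:ℝ) ≤ 1/((t:ℝ)+1)*η*(M:ℝ) by positivity)
      linarith
    have ht1' : (t:ℝ)*(Kmax:ℝ) ≤ (t:ℝ)*(1/((t:ℝ)+1)*η*M + 1) :=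
      mul_le_mul_of_nonneg_left h1 (by positivity)
    have key : (t:ℝ)*(1/((t:ℝ)+1)*η*M + 1) ≤ η*M + t := by
      have h4 : (t:ℝ)/((t:ℝ)+1) ≤ 1 := by
        rw [div_le_one (by positivity)]; linarith
      have h5 : (0:ℝ) ≤ η*M := by positivity
      have h9 : (t:ℝ) * (1/((t:ℝ)+1)) ≤ 1 := by
        rw [mul_one_div, div_le_one (by positivity)]; linarith
      calc (t:ℝ)*(1/((t:ℝ)+1)*η*M + 1) = ((t:ℝ)*(1/((t:ℝ)+1)))*(η*M) + t := by ring
        _ ≤ 1*(η*M) + t := by nlinarith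
        _ = η*M + t := by ring
    have hM3 : η*(M:ℝ) ≤ (M:ℝ)/3 := by nlinarith [Nat.cast_nonneg (α := ℝ) M]
    have h3t : 3*(t:ℝ) ≤ 2*(M:ℝ) := by
      have : 3*t ≤ 2*M := by omega
      exact_mod_cast this
    have h2 : (t:ℝ)*(Kmax:ℝ) ≤ (M:ℝ) := by linarith
    have h2' : t * Kmax ≤ M := by exact_mod_cast h2
    omega
  have hMD : D * 2^t ≤ (M:ℝ) := by
    have h1 : D * 2^t ≤ (Nat.ceil (D * 2^t) : ℝ) := Nat.le_ceil _
    have h2 : (Nat.ceil (D * 2^t) : ℕ) ≤ M := by omega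
    have h2' : ((Nat.ceil (D * 2^t) : ℕ) : ℝ) ≤ (M:ℝ) := by exact_mod_cast h2
    linarith
  have hGM : G ≤ (M:ℝ)^(t+1) := by
    rw [hG, mul_pow]
    calc D * ((2:ℝ)^t * (M:ℝ)^t) = (D*2^t) * (M:ℝ)^t := by ring
      _ ≤ (M:ℝ) * (M:ℝ)^t := mul_le_mul_of_nonneg_right hMD (by positivity)
      _ = (M:ℝ)^(t+1) := by ring
  have main : ∀ k, ∀ κ : Fin m → ℕ, wt κ ≤ N → ∃ Z : ℕ → ℤ,
      (∀ ν, (Prec m N Tp TS P k κ).coeff ν = (Z ν : ℂ) / (ν.factorial : ℂ)) ∧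
      (∀ ν, M + t * k ≤ ν → Z ν = 0) ∧
      (k ≤ Kmax → ∀ ν, (|Z ν| : ℝ) ≤ Bp * G ^ k) := by
    intro k
    induction k with
    | zero =>
      intro κ hκ
      by_cases hΩ : inOmega m N κ
      · refine ⟨fun ν => if ν < M then pi κ ν else 0, ?_, ?_, ?_⟩
        · intro ν
          dsimp only
          show (P κ).coeff ν = _
          by_cases h : ν < M
          · rw [if_pos h]; exact (hpi κ hΩ ν h).1
          · rw [if_neg h, Polynomial.coeff_eq_zero_of_degree_lt]
            · simp
            · refine lt_of_lt_of_le (hSiegel.2.1 κ) ?_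
              exact_mod_cast Nat.cast_le.mpr (by omega)
        · intro ν hν
          dsimp only
          rw [if_neg (by omega)]
        · intro _ ν
          dsimp only
          by_cases h : ν < M
          · rw [if_pos h]
            calc (|pi κ ν| : ℝ) ≤ Bp := (hpi κ hΩ ν h).2
              _ = Bp * G^0 := by rw [pow_zero, mul_one]
          · rw [if_neg h]
            simp only [abs_zero, Int.cast_zero]
            positivity
      · refine ⟨fun _ => 0, ?_, fun _ _ => rfl, ?_⟩
        · intro ν
          show (P κ).coeff ν = _
          rw [hSiegel.1 κ hΩ]
          simp
        · intro _ ν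
          simp only [abs_zero, Int.cast_zero]
          positivity
    | succ k ih =>
      have ihall : ∀ κ' : Fin m → ℕ, ∃ Z : ℕ → ℤ,
          wt κ' ≤ N →
            ((∀ ν, (Prec m N Tp TS P k κ').coeff ν = (Z ν : ℂ) / (ν.factorial : ℂ)) ∧
             (∀ ν, M + t * k ≤ ν → Z ν = 0) ∧
             (k ≤ Kmax → ∀ ν, (|Z ν| : ℝ) ≤ Bp * G ^ k)) := by
        intro κ'
        by_cases h : wt κ' ≤ N
        · obtain ⟨Z, h1, h2, h3⟩ := ih κ' h
          exact ⟨Z, fun _ => ⟨h1, h2, h3⟩⟩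
        · exact ⟨fun _ => 0, fun h' => absurd h' h⟩
      choose Zf hZf using ihall
      intro κ hκ
      have hwsub : ∀ l : Fin m, wt (sub1 κ l) ≤ N := fun l => le_trans (wt_sub1_le42 κ l) hκ
      have hwadd : ∀ l j : Fin m, κ l ≠ 0 → wt (add1 (sub1 κ l) j) ≤ N := by
        intro l j h
        rw [wt_add1_sub142 κ l j h]; exact hκ
      set W1 : ℕ → ℤ := fun ν =>
        if i₀ ≤ ν then (τ:ℤ) * Zf κ (ν - i₀ + 1) * (ν.descFactorial i₀ : ℤ) else 0 with hW1
      set W2 : Fin m → ℕ → ℤ := fun l ν =>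
        ∑ sr ∈ Finset.HasAntidiagonal.antidiagonal ν, ts l 0 sr.1 * Zf (sub1 κ l) sr.2 *
          (ν.descFactorial sr.1 : ℤ) with hW2
      set W3 : Fin m → Fin m → ℕ → ℤ := fun l j ν =>
        ∑ sr ∈ Finset.HasAntidiagonal.antidiagonal ν, ts l j.succ sr.1 * Zf (add1 (sub1 κ l) j) sr.2 *
          (ν.descFactorial sr.1 : ℤ) with hW3
      refine ⟨fun ν => W1 ν + ((wt κ : ℤ) + 1 - (N:ℤ)) *
          (∑ l : Fin m, if κ l = 0 then 0 else W2 l ν)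
        - ∑ l : Fin m, ∑ j : Fin m, ((κ j : ℤ) - (if l = j then 1 else 0) + 1) *
            (if κ l = 0 then 0 else W3 l j ν), ?_, ?_, ?_⟩
      -- Part 1 : coefficient identity
      · intro ν
        dsimp only
        have e1 : (Tp * Polynomial.derivative (Prec m N Tp TS P k κ)).coeff ν
            = ((W1 ν : ℤ) : ℂ) / (ν.factorial : ℂ) := by
          rw [hTp]
          exact derivW42 _ _ _ _ (hZf κ hκ).1 ν
        have e2 : ∀ l : Fin m,
            ((if κ l = 0 then 0 else TS l 0 * Prec m N Tp TS P k (sub1 κ l)) : Polynomial ℂ).coeff ν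
            = ((if κ l = 0 then (0:ℤ) else W2 l ν : ℤ) : ℂ) / (ν.factorial : ℂ) := by
          intro l
          split_ifs with h
          · simp
          · exact prodW42 _ _ _ _ (hts l 0) ((hZf (sub1 κ l) (hwsub l)).1) ν
        have e3 : ∀ l j : Fin m,
            ((if κ l = 0 then 0 else TS l j.succ * Prec m N Tp TS P k (add1 (sub1 κ l) j)) :
                Polynomial ℂ).coeff ν
            = ((if κ l = 0 then (0:ℤ) else W3 l j ν : ℤ) : ℂ) / (ν.factorial : ℂ) := by
          intro l j
          split_ifs with h
          · simp
          · exact prodW42 _ _ _ _ (hts l j.succ) ((hZf _ (hwadd l j h)).1) ν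
        simp only [Prec]
        rw [Polynomial.coeff_sub, Polynomial.coeff_add, Polynomial.coeff_C_mul,
          Polynomial.finset_sum_coeff]
        simp only [Polynomial.finset_sum_coeff, Polynomial.coeff_C_mul]
        rw [e1, Finset.sum_congr rfl (fun l _ => e2 l),
          Finset.sum_congr rfl (fun l _ => Finset.sum_congr rfl (fun j _ => by rw [e3 l j]))]
        simp only [← mul_div_assoc]
        simp only [← Finset.sum_div]
        simp only [← mul_div_assoc]
        rw [← add_div, ← sub_div]
        congr 1
        push_cast [apply_ite (fun z : ℤ => (z : ℂ))]
        ring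
      -- Part 2 : support
      · intro ν hν
        dsimp only
        have htk : t*(k+1) = t*k + t := by ring
        have z1 : W1 ν = 0 := by
          simp only [hW1]
          split_ifs with h
          · rw [(hZf κ hκ).2.1 (ν - i₀ + 1) (by omega)]; ring
          · rfl
        have z2 : ∀ l : Fin m, (if κ l = 0 then (0:ℤ) else W2 l ν) = 0 := by
          intro l
          split_ifs with h
          · rfl
          · simp only [hW2]
            exact prodW42_zero _ _ t (M + t*k) ν (hts0 l 0)
              ((hZf (sub1 κ l) (hwsub l)).2.1) (by omega)
        have z3 : ∀ l j : Fin m,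
            ((κ j : ℤ) - (if l = j then 1 else 0) + 1) * (if κ l = 0 then (0:ℤ) else W3 l j ν)
              = 0 := by
          intro l j
          by_cases h : κ l = 0
          · rw [if_pos h, mul_zero]
          · rw [if_neg h]
            exact mul_eq_zero_of_right _ (prodW42_zero _ _ t (M + t*k) ν (hts0 l j.succ)
              ((hZf _ (hwadd l j h)).2.1) (by omega))
        rw [z1, Finset.sum_congr rfl (fun l _ => z2 l),
          Finset.sum_congr rfl (fun l _ => Finset.sum_congr rfl (fun j _ => z3 l j))]
        simp
      -- Part 3 : bound
      · intro hkK ν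
        dsimp only
        have htk : t*(k+1) = t*k + t := by ring
        have hk' : k ≤ Kmax := by omega
        have hb0 : ∀ κ', wt κ' ≤ N → ∀ ν', (|Zf κ' ν'| : ℝ) ≤ Bp * G^k :=
          fun κ' h ν' => (hZf κ' h).2.2 hk' ν'
        have hBG0 : (0:ℝ) ≤ Bp * G^k := by positivity
        have h2M : M + t * (k+1) ≤ 2*M := by
          have h1 : t*(k+1) ≤ t*Kmax := Nat.mul_le_mul_left t hkK
          omega
        have hE : (((M + t*k + t : ℕ)):ℝ)^t ≤ (2*(M:ℝ))^t := by
          apply pow_le_pow_left₀ (by positivity)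
          have h1 : ((M + t*k + t : ℕ) : ℝ) ≤ ((2*M : ℕ) : ℝ) := by
            exact_mod_cast (show M + t*k + t ≤ 2*M by omega)
          push_cast at h1 ⊢
          linarith
        have hE0 : (0:ℝ) ≤ (2*(M:ℝ))^t := by positivity
        have hT20 : (0:ℝ) ≤ ((t:ℝ)+1) * A * (Bp * G^k) * (2*(M:ℝ))^t := by positivity
        have bW1 : |if i₀ ≤ ν then (τ:ℝ) * (Zf κ (ν - i₀ + 1) : ℝ) * (ν.descFactorial i₀ : ℝ)
            else (0:ℝ)| ≤ (τ:ℝ) * (2*(M:ℝ))^t * (Bp * G^k) := by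
          split_ifs with h
          · by_cases hz : Zf κ (ν - i₀ + 1) = 0
            · rw [hz]
              simp only [Int.cast_zero, mul_zero, zero_mul, abs_zero]
              exact mul_nonneg (by positivity) hBG0
            · have hlt : ν - i₀ + 1 < M + t*k := by
                by_contra hge
                exact hz ((hZf κ hκ).2.1 _ (by omega))
              have hν2M : ν ≤ 2*M := by omega
              have hdesc : ((ν.descFactorial i₀ : ℕ) : ℝ) ≤ (2*(M:ℝ))^t := by
                have hd1 : ν.descFactorial i₀ ≤ (2*M)^t := by
                  calc ν.descFactorial i₀ ≤ ν^i₀ := Nat.descFactorial_le_pow ν i₀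
                    _ ≤ (2*M)^i₀ := Nat.pow_le_pow_left hν2M i₀
                    _ ≤ (2*M)^t := Nat.pow_le_pow_right (by omega) hi₀t
                calc ((ν.descFactorial i₀ : ℕ) : ℝ) ≤ (((2*M)^t : ℕ):ℝ) := by exact_mod_cast hd1
                  _ = (2*(M:ℝ))^t := by push_cast; ring
              calc |(τ:ℝ) * (Zf κ (ν - i₀ + 1) : ℝ) * (ν.descFactorial i₀ : ℝ)|
                  = (τ:ℝ) * |(Zf κ (ν - i₀ + 1) : ℝ)| * ((ν.descFactorial i₀ : ℕ) : ℝ) := by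
                    rw [abs_mul, abs_mul, Nat.abs_cast, Nat.abs_cast]
                _ ≤ (τ:ℝ) * (Bp * G^k) * (2*(M:ℝ))^t := by
                    refine mul_le_mul (mul_le_mul le_rfl (hb0 κ hκ (ν - i₀ + 1))
                      (abs_nonneg _) (by positivity)) hdesc (by positivity) ?_
                    exact mul_nonneg (by positivity) hBG0
                _ = (τ:ℝ) * (2*(M:ℝ))^t * (Bp * G^k) := by ring
          · simp only [abs_zero]
            exact mul_nonneg (by positivity) hBG0
        have bW2 : ∀ l : Fin m, (|W2 l ν| : ℝ)
            ≤ ((t:ℝ)+1) * A * (Bp * G^k) * (2*(M:ℝ))^t := by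
          intro l
          simp only [hW2]
          push_cast
          exact prodW42_bound _ _ A (Bp * G^k) ((2*(M:ℝ))^t) t (M + t*k) ν
            (hAb l 0) (hts0 l 0) (hb0 (sub1 κ l) (hwsub l)) ((hZf (sub1 κ l) (hwsub l)).2.1)
            hA0 hBG0 hE hE0
        have bW3 : ∀ l j : Fin m, κ l ≠ 0 → (|W3 l j ν| : ℝ)
            ≤ ((t:ℝ)+1) * A * (Bp * G^k) * (2*(M:ℝ))^t := by
          intro l j h
          simp only [hW3]
          push_cast
          exact prodW42_bound _ _ A (Bp * G^k) ((2*(M:ℝ))^t) t (M + t*k) ν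
            (hAb l j.succ) (hts0 l j.succ) (hb0 _ (hwadd l j h)) ((hZf _ (hwadd l j h)).2.1)
            hA0 hBG0 hE hE0
        have hc1 : ((|(wt κ : ℤ) + 1 - (N:ℤ)| : ℤ) : ℝ) ≤ (N:ℝ) + 1 := by
          have h0 : |((wt κ : ℤ) + 1 - (N:ℤ))| ≤ (N:ℤ) + 1 := by
            rw [abs_le]; omega
          exact_mod_cast h0
        have hc2 : ∀ l j : Fin m, ((|(κ j : ℤ) - (if l = j then 1 else 0) + 1| : ℤ) : ℝ)
            ≤ (N:ℝ) + 1 := by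
          intro l j
          have hj : κ j ≤ N := le_trans (comp_le_wt42 κ j) hκ
          have h0 : |((κ j : ℤ) - (if l = j then 1 else 0) + 1)| ≤ (N:ℤ) + 1 := by
            rw [abs_le]; split_ifs <;> omega
          exact_mod_cast h0
        have tri : ∀ x y z : ℝ, |x + y - z| ≤ |x| + |y| + |z| := by
          intro x y z
          have h1 := abs_add_le (x + y) (-z)
          have h2 := abs_add_le x y
          rw [abs_neg] at h1
          calc |x + y - z| = |x + y + (-z)| := by ring_nf
            _ ≤ |x + y| + |z| := h1
            _ ≤ |x| + |y| + |z| := by linarith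
        push_cast [apply_ite (fun z : ℤ => (z : ℝ))]
        refine le_trans (tri _ _ _) ?_
        have hb1 : |((W1 ν : ℤ) : ℝ)| ≤ (τ:ℝ) * (2*(M:ℝ))^t * (Bp * G^k) := by
          simp only [hW1]; push_cast [apply_ite (fun z : ℤ => (z : ℝ))]; exact bW1
        have hb2 : |((wt κ : ℝ) + 1 - (N:ℝ)) *
            (∑ l : Fin m, if κ l = 0 then (0:ℝ) else ((W2 l ν : ℤ) : ℝ))|
            ≤ ((N:ℝ)+1) * ((m:ℝ) * (((t:ℝ)+1) * A * (Bp * G^k) * (2*(M:ℝ))^t)) := by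
          rw [abs_mul]
          apply mul_le_mul ?_ ?_ (abs_nonneg _) (by positivity)
          · have hcast : ((wt κ : ℝ) + 1 - (N:ℝ)) = (((wt κ : ℤ) + 1 - (N:ℤ) : ℤ) : ℝ) := by
              push_cast; ring
            rw [hcast, ← Int.cast_abs]
            exact hc1
          · calc |∑ l : Fin m, if κ l = 0 then (0:ℝ) else ((W2 l ν : ℤ) : ℝ)|
                ≤ ∑ l : Fin m, |if κ l = 0 then (0:ℝ) else ((W2 l ν : ℤ) : ℝ)| :=
                  Finset.abs_sum_le_sum_abs _ _
              _ ≤ ∑ _l : Fin m, ((t:ℝ)+1) * A * (Bp * G^k) * (2*(M:ℝ))^t := by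
                  apply Finset.sum_le_sum
                  intro l _
                  split_ifs with h
                  · simpa using hT20
                  · exact bW2 l
              _ = (m:ℝ) * (((t:ℝ)+1) * A * (Bp * G^k) * (2*(M:ℝ))^t) := by
                  rw [Finset.sum_const, Finset.card_univ, Fintype.card_fin, nsmul_eq_mul]
        have hb3 : |∑ l : Fin m, ∑ j : Fin m, ((κ j : ℝ) - (if l = j then (1:ℝ) else 0) + 1) *
            (if κ l = 0 then (0:ℝ) else ((W3 l j ν : ℤ) : ℝ))|
            ≤ (m:ℝ) * ((m:ℝ) * (((N:ℝ)+1) * (((t:ℝ)+1) * A * (Bp * G^k) * (2*(M:ℝ))^t))) := by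
          have inner : ∀ l j : Fin m, |((κ j : ℝ) - (if l = j then (1:ℝ) else 0) + 1) *
              (if κ l = 0 then (0:ℝ) else ((W3 l j ν : ℤ) : ℝ))|
              ≤ ((N:ℝ)+1) * (((t:ℝ)+1) * A * (Bp * G^k) * (2*(M:ℝ))^t) := by
            intro l j
            rw [abs_mul]
            apply mul_le_mul ?_ ?_ (abs_nonneg _) (by positivity)
            · have hcast : ((κ j : ℝ) - (if l = j then (1:ℝ) else 0) + 1)
                  = ((((κ j : ℤ) - (if l = j then 1 else 0) + 1) : ℤ) : ℝ) := by
                push_cast [apply_ite (fun z : ℤ => (z : ℝ))]; ring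
              rw [hcast, ← Int.cast_abs]
              exact hc2 l j
            · split_ifs with h
              · simpa using hT20
              · exact bW3 l j h
          calc |∑ l : Fin m, ∑ j : Fin m, ((κ j : ℝ) - (if l = j then (1:ℝ) else 0) + 1) *
              (if κ l = 0 then (0:ℝ) else ((W3 l j ν : ℤ) : ℝ))|
              ≤ ∑ l : Fin m, |∑ j : Fin m, ((κ j : ℝ) - (if l = j then (1:ℝ) else 0) + 1) *
                (if κ l = 0 then (0:ℝ) else ((W3 l j ν : ℤ) : ℝ))| :=
                Finset.abs_sum_le_sum_abs _ _
            _ ≤ ∑ _l : Fin m, ((m:ℝ) * (((N:ℝ)+1) * (((t:ℝ)+1) * A * (Bp * G^k) * (2*(M:ℝ))^t))) := by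
                apply Finset.sum_le_sum
                intro l _
                calc |∑ j : Fin m, ((κ j : ℝ) - (if l = j then (1:ℝ) else 0) + 1) *
                    (if κ l = 0 then (0:ℝ) else ((W3 l j ν : ℤ) : ℝ))|
                    ≤ ∑ j : Fin m, |((κ j : ℝ) - (if l = j then (1:ℝ) else 0) + 1) *
                      (if κ l = 0 then (0:ℝ) else ((W3 l j ν : ℤ) : ℝ))| :=
                      Finset.abs_sum_le_sum_abs _ _
                  _ ≤ ∑ _j : Fin m, ((N:ℝ)+1) * (((t:ℝ)+1) * A * (Bp * G^k) * (2*(M:ℝ))^t) :=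
                      Finset.sum_le_sum (fun j _ => inner l j)
                  _ = (m:ℝ) * (((N:ℝ)+1) * (((t:ℝ)+1) * A * (Bp * G^k) * (2*(M:ℝ))^t)) := by
                      rw [Finset.sum_const, Finset.card_univ, Fintype.card_fin, nsmul_eq_mul]
            _ = (m:ℝ) * ((m:ℝ) * (((N:ℝ)+1) * (((t:ℝ)+1) * A * (Bp * G^k) * (2*(M:ℝ))^t))) := by
                rw [Finset.sum_const, Finset.card_univ, Fintype.card_fin, nsmul_eq_mul]
        refine le_trans (add_le_add (add_le_add hb1 hb2) hb3) ?_
        rw [pow_succ, hG, hDdef]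
        apply le_of_eq
        ring
  intro κ hκ k hk ν
  obtain ⟨Z, h1, h2, h3⟩ := main (k-1) κ hκ.2
  refine ⟨Z ν, h1 ν, ?_⟩
  intro hklt
  have hkfl : k ≤ Kmax := by
    rw [hKmax]
    have : k ≤ Nat.floor (1/((t:ℝ)+1) * η * (M:ℝ)) :=
      Nat.le_floor (le_of_lt hklt)
    omega
  have hb := h3 (by omega) ν
  refine le_trans hb ?_
  rw [mul_le_mul_iff_right₀ hBp0]
  have hGk : G^(k-1) ≤ ((M:ℝ)^(t+1))^(k-1) :=
    pow_le_pow_left₀ (le_of_lt hG0) hGM (k-1)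
  refine le_trans hGk ?_
  rw [← pow_mul, ← Real.rpow_natCast (M:ℝ) ((t+1)*(k-1))]
  apply Real.rpow_le_rpow_of_exponent_le hM1'
  have hk1 : ((k-1:ℕ):ℝ) ≤ (k:ℝ) - 1 := by
    have : (1:ℕ) ≤ k := hk
    push_cast [Nat.cast_sub this]
    linarith
  have hexp : ((t:ℝ)+1) * ((k:ℝ)-1) ≤ η * (M:ℝ) := by
    have h5 : ((t:ℝ)+1) * (k:ℝ) < η * (M:ℝ) := by
      have h6 : (k:ℝ) < 1/((t:ℝ)+1) * η * (M:ℝ) := hklt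
      have h7 : ((t:ℝ)+1) * (k:ℝ) < ((t:ℝ)+1) * (1/((t:ℝ)+1) * η * (M:ℝ)) :=
        mul_lt_mul_of_pos_left h6 (by positivity)
      have h8 : ((t:ℝ)+1) * (1/((t:ℝ)+1) * η * (M:ℝ)) = η * (M:ℝ) := by
        have h9 : ((t:ℝ)+1) * (1/((t:ℝ)+1)) = 1 := by
          rw [mul_one_div, div_self (by positivity)]
        calc ((t:ℝ)+1) * (1/((t:ℝ)+1) * η * (M:ℝ)) = (((t:ℝ)+1) * (1/((t:ℝ)+1))) * (η * (M:ℝ)) := by ring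
          _ = η * (M:ℝ) := by rw [h9]; ring
      linarith
    nlinarith [hk1, Nat.cast_nonneg (α := ℝ) k]
  calc ((((t+1)*(k-1) : ℕ)):ℝ) = ((t:ℝ)+1) * ((k-1:ℕ):ℝ) := by push_cast; ring
    _ ≤ ((t:ℝ)+1) * ((k:ℝ)-1) := by
        apply mul_le_mul_of_nonneg_left hk1 (by positivity)
    _ ≤ η * (M:ℝ) := hexp
    _ = 1 * η * (M:ℝ) := by ring
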